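/- For every α > 0 there is a unique β = p_{+−1}(α) with β > α and λ'(β) = λ'(β − α); moreover this solution satisfies max(α, γ₀) ≤ β ≤ α + γ₀ and 0 < β − α ≤ γ₀. -/

import Mathlib

/-!
`lam` is the gravity–capillary dispersion relation λ(x) = √(x + x³) (with g = σ = 1);
λ' denotes its derivative on (0, ∞); `gamma0` is γ₀ = √((2√3 − 3)/3).
-/

noncomputable section

open Real Set Filter Topology

/-- The dispersion relation λ(x) = √(x + x³). -/
def lam (x : ℝ) : ℝ := Real.sqrt (x + x ^ 3)

/-- γ₀ = √((2√3 − 3)/3). -/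
def gamma0 : ℝ := Real.sqrt ((2 * Real.sqrt 3 - 3) / 3)

namespace Aux
def g (x : ℝ) : ℝ := (1 + 3 * x ^ 2) / (2 * Real.sqrt (x + x ^ 3))
def hfun (x : ℝ) : ℝ := (1 + 3 * x ^ 2) ^ 2 / (x + x ^ 3)
lemma sqrt3_sq : Real.sqrt 3 ^ 2 = 3 := Real.sq_sqrt (by norm_num)
lemma sqrt3_gt : (3:ℝ)/2 < Real.sqrt 3 := by nlinarith [sqrt3_sq, Real.sqrt_nonneg 3]
lemma gamma0_sq : gamma0 ^ 2 = (2 * Real.sqrt 3 - 3) / 3 := by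
  rw [gamma0, Real.sq_sqrt (by nlinarith [sqrt3_gt])]
lemma gamma0_pos : 0 < gamma0 := by apply Real.sqrt_pos.2; nlinarith [sqrt3_gt]
lemma arg_pos {x : ℝ} (hx : 0 < x) : 0 < x + x ^ 3 := by positivity
lemma sqrt_arg_pos {x : ℝ} (hx : 0 < x) : 0 < Real.sqrt (x + x ^ 3) :=
  Real.sqrt_pos.2 (arg_pos hx)

lemma deriv_lam {x : ℝ} (hx : 0 < x) : deriv lam x = g x := by
  have hpos := arg_pos hx
  have hv : HasDerivAt (fun x : ℝ => x + x ^ 3) (1 + 3 * x ^ 2) x := by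
    simpa [Pi.add_def] using (hasDerivAt_id x).add (hasDerivAt_pow 3 x)
  have h := (Real.hasDerivAt_sqrt hpos.ne').comp x hv
  have hd : deriv lam x = 1 / (2 * Real.sqrt (x + x ^ 3)) * (1 + 3 * x ^ 2) := h.deriv
  rw [hd, g]
  field_simp

lemma hasDerivAt_hfun {x : ℝ} (hx : 0 < x) :
    HasDerivAt hfun ((2 * (1 + 3 * x ^ 2) * (6 * x) * (x + x ^ 3)
      - (1 + 3 * x ^ 2) ^ 2 * (1 + 3 * x ^ 2)) / (x + x ^ 3) ^ 2) x := by
  have h1 : HasDerivAt (fun x : ℝ => 1 + 3 * x ^ 2) (6 * x) x := by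
    have := ((hasDerivAt_pow 2 x).const_mul 3).const_add 1
    simpa using this.congr_deriv (by ring)
  have hu : HasDerivAt (fun x : ℝ => (1 + 3 * x ^ 2) ^ 2)
      (2 * (1 + 3 * x ^ 2) * (6 * x)) x := by
    simpa [mul_comm, mul_assoc, Pi.pow_def] using h1.pow 2
  have hv : HasDerivAt (fun x : ℝ => x + x ^ 3) (1 + 3 * x ^ 2) x := by
    simpa [Pi.add_def] using (hasDerivAt_id x).add (hasDerivAt_pow 3 x)
  exact hu.div hv (arg_pos hx).ne'

lemma hfun_anti : StrictAntiOn hfun (Ioc 0 gamma0) := by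
  have hconv : Convex ℝ (Ioc (0:ℝ) gamma0) := convex_Ioc _ _
  apply strictAntiOn_of_deriv_neg hconv
  · apply ContinuousOn.div (by fun_prop) (by fun_prop)
    intro x hx; exact (arg_pos hx.1).ne'
  · intro x hx
    rw [interior_Ioc] at hx
    rw [(hasDerivAt_hfun hx.1).deriv]
    apply div_neg_of_neg_of_pos _ (pow_pos (arg_pos hx.1) 2)
    have hx2 : x ^ 2 < gamma0 ^ 2 := pow_lt_pow_left₀ hx.2 hx.1.le (by norm_num)
    have h4 : (gamma0 ^ 2) ^ 2 = ((2 * Real.sqrt 3 - 3) / 3) ^ 2 := by rw [gamma0_sq]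
    have key : 3 * x ^ 4 + 6 * x ^ 2 - 1 < 0 := by
      nlinarith [mul_pos (sub_pos.2 hx2) (show (0:ℝ) < x ^ 2 + gamma0 ^ 2 + 2 by positivity),
        h4, sqrt3_sq, gamma0_sq]
    have hmul := mul_neg_of_pos_of_neg (show (0:ℝ) < 1 + 3 * x ^ 2 by positivity) key
    nlinarith [hmul]

lemma hfun_mono : StrictMonoOn hfun (Ici gamma0) := by
  apply strictMonoOn_of_deriv_pos (convex_Ici _)
  · apply ContinuousOn.div (by fun_prop) (by fun_prop)
    intro x hx; exact (arg_pos (lt_of_lt_of_le gamma0_pos hx)).ne'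
  · intro x hx
    rw [interior_Ici] at hx
    have hxp : 0 < x := lt_trans gamma0_pos hx
    rw [(hasDerivAt_hfun hxp).deriv]
    apply div_pos _ (pow_pos (arg_pos hxp) 2)
    have hx2 : gamma0 ^ 2 < x ^ 2 := pow_lt_pow_left₀ hx gamma0_pos.le (by norm_num)
    have h4 : (gamma0 ^ 2) ^ 2 = ((2 * Real.sqrt 3 - 3) / 3) ^ 2 := by rw [gamma0_sq]
    have key : 0 < 3 * x ^ 4 + 6 * x ^ 2 - 1 := by
      nlinarith [mul_pos (sub_pos.2 hx2) (show (0:ℝ) < x ^ 2 + gamma0 ^ 2 + 2 by positivity),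
        h4, sqrt3_sq, gamma0_sq]
    have hmul := mul_pos (show (0:ℝ) < 1 + 3 * x ^ 2 by positivity) key
    nlinarith [hmul]

lemma g_eq_sqrt {x : ℝ} (hx : 0 < x) : g x = Real.sqrt (hfun x) / 2 := by
  rw [g, hfun, Real.sqrt_div (sq_nonneg _), Real.sqrt_sq (by positivity)]
  ring

lemma g_lt_g {x y : ℝ} (hx : 0 < x) (hy : 0 < y) (h : hfun x < hfun y) : g x < g y := by
  rw [g_eq_sqrt hx, g_eq_sqrt hy]
  have : Real.sqrt (hfun x) < Real.sqrt (hfun y) := Real.sqrt_lt_sqrt (by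
    rw [hfun]; positivity) h
  linarith

lemma g_anti : StrictAntiOn g (Ioc 0 gamma0) := fun x hx y hy hxy =>
  g_lt_g (hx.1.trans hxy) hx.1 (hfun_anti hx hy hxy)

lemma g_mono : StrictMonoOn g (Ici gamma0) := fun x hx y hy hxy =>
  g_lt_g (gamma0_pos.trans_le hx) (gamma0_pos.trans_le (hx.trans hxy.le))
    (hfun_mono hx hy hxy)

lemma g_contOn : ContinuousOn g (Ioi 0) := by
  apply ContinuousOn.div (by fun_prop)
  · exact (continuous_const.mul ((continuous_id.add (continuous_pow 3)).sqrt)).continuousOn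
  · intro x hx
    exact (mul_pos two_pos (sqrt_arg_pos hx)).ne'

lemma g_tendsto : Tendsto g (𝓝[>] (0:ℝ)) atTop := by
  have h1 : Tendsto (fun t : ℝ => 2 * Real.sqrt (t + t ^ 3)) (𝓝[>] 0) (𝓝[>] 0) := by
    rw [tendsto_nhdsWithin_iff]
    constructor
    · have : Tendsto (fun t : ℝ => 2 * Real.sqrt (t + t ^ 3)) (𝓝 0) (𝓝 (2 * Real.sqrt (0 + 0 ^ 3))) := by
        exact (continuous_const.mul ((continuous_id.add (continuous_pow 3)).sqrt)).tendsto 0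
      simpa using this.mono_left nhdsWithin_le_nhds
    · filter_upwards [self_mem_nhdsWithin] with t ht
      exact mul_pos two_pos (sqrt_arg_pos ht)
  have h2 : Tendsto (fun t : ℝ => (2 * Real.sqrt (t + t ^ 3))⁻¹) (𝓝[>] 0) atTop :=
    h1.inv_tendsto_nhdsGT_zero
  apply tendsto_atTop_mono' _ _ h2
  filter_upwards [self_mem_nhdsWithin] with t ht
  rw [g, div_eq_mul_inv]
  nlinarith [mul_pos two_pos (sqrt_arg_pos ht),
    inv_pos.2 (mul_pos two_pos (sqrt_arg_pos ht)), sq_nonneg t,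
    mul_le_mul_of_nonneg_right (show (1:ℝ) ≤ 1 + 3 * t ^ 2 by nlinarith [sq_nonneg t])
      (inv_pos.2 (mul_pos two_pos (sqrt_arg_pos ht))).le]

end Aux

/-- For every α > 0 there is a unique β = p₊₋₁(α) with β > α and λ'(β) = λ'(β − α);
it satisfies max(α, γ₀) ≤ β ≤ α + γ₀ and 0 < β − α ≤ γ₀. -/
theorem stmt10 (α : ℝ) (hα : 0 < α) :
    ∃ β : ℝ, (α < β ∧ deriv lam β = deriv lam (β - α)) ∧
      (∀ β' : ℝ, α < β' → deriv lam β' = deriv lam (β' - α) → β' = β) ∧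
      max α gamma0 ≤ β ∧ β ≤ α + gamma0 ∧ 0 < β - α ∧ β - α ≤ gamma0 := by
  -- step 1: find t₀ ∈ (0, γ₀) with Aux.g (t₀ + α) - Aux.g t₀ < 0
  have hadd : Tendsto (fun t : ℝ => t + α) (𝓝[>] 0) (𝓝 α) := by
    have : Tendsto (fun t : ℝ => t + α) (𝓝 0) (𝓝 (0 + α)) :=
      (continuous_id.add continuous_const).tendsto 0
    simpa using this.mono_left nhdsWithin_le_nhds
  have h4 : Tendsto (fun t : ℝ => Aux.g (t + α)) (𝓝[>] 0) (𝓝 (Aux.g α)) :=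
    (Aux.g_contOn.continuousAt (Ioi_mem_nhds hα)).tendsto.comp hadd
  have h5 : Tendsto (fun t : ℝ => Aux.g (t + α) - Aux.g t) (𝓝[>] 0) atBot := by
    simpa [sub_eq_add_neg] using h4.add_atBot (tendsto_neg_atTop_atBot.comp Aux.g_tendsto)
  obtain ⟨t₀, hG0, ht₀⟩ :=
    ((h5.eventually (eventually_lt_atBot 0)).and
      (Ioo_mem_nhdsGT_of_mem ⟨le_refl (0:ℝ), Aux.gamma0_pos⟩)).exists
  -- step 2: IVT on [t₀, γ₀]
  have hsub : Icc t₀ gamma0 ⊆ Ioi 0 := fun x hx => lt_of_lt_of_le ht₀.1 hx.1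
  have hGc : ContinuousOn (fun t : ℝ => Aux.g (t + α) - Aux.g t) (Icc t₀ gamma0) := by
    refine ContinuousOn.sub (Aux.g_contOn.comp (by fun_prop) ?_) (Aux.g_contOn.mono hsub)
    intro x hx
    exact lt_of_lt_of_le (by linarith [ht₀.1, hx.1] : (0:ℝ) < x + α) le_rfl
  have hGγ : 0 < Aux.g (gamma0 + α) - Aux.g gamma0 := by
    have := Aux.g_mono (le_refl gamma0) (by linarith : gamma0 ≤ gamma0 + α) (by linarith)
    linarith
  obtain ⟨t, htmem, htz⟩ := intermediate_value_Icc ht₀.2.le hGc ⟨hG0.le, hGγ.le⟩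
  have htpos : 0 < t := lt_of_lt_of_le ht₀.1 htmem.1
  have hteq : Aux.g (t + α) = Aux.g t := sub_eq_zero.mp htz
  -- key structural facts for any solution
  have key : ∀ s : ℝ, 0 < s → Aux.g (s + α) = Aux.g s → s < gamma0 ∧ gamma0 < s + α := by
    intro s hs heq
    constructor
    · by_contra hle
      push_neg at hle
      have := Aux.g_mono hle (by linarith : gamma0 ≤ s + α) (by linarith)
      linarith
    · by_contra hle
      push_neg at hle
      have := Aux.g_anti (⟨hs, by linarith⟩ : s ∈ Ioc 0 gamma0)
        (⟨by linarith, hle⟩ : s + α ∈ Ioc 0 gamma0) (by linarith)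
      linarith
  have hkt := key t htpos hteq
  refine ⟨α + t, ⟨by linarith, ?_⟩, ?_, ?_, ?_, ?_, ?_⟩
  · rw [Aux.deriv_lam (by linarith : (0:ℝ) < α + t),
      Aux.deriv_lam (show (0:ℝ) < α + t - α by linarith)]
    rw [show α + t - α = t by ring, show α + t = t + α by ring]
    exact hteq
  · -- uniqueness
    intro β' hβ' hder
    have hs' : 0 < β' - α := by linarith
    have heq' : Aux.g (β' - α + α) = Aux.g (β' - α) := by
      rw [show β' - α + α = β' by ring]
      rw [Aux.deriv_lam (hα.trans hβ'), Aux.deriv_lam hs'] at hder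
      exact hder
    have hk' := key _ hs' heq'
    rw [show β' - α + α = β' by ring] at hk' heq'
    rcases lt_trichotomy β' (α + t) with hlt | heq | hgt
    · exfalso
      have h1 : Aux.g (β' - α) > Aux.g t :=
        Aux.g_anti (⟨hs', hk'.1.le⟩ : β' - α ∈ Ioc 0 gamma0)
          (⟨htpos, hkt.1.le⟩ : t ∈ Ioc 0 gamma0) (by linarith)
      have h2 : Aux.g β' < Aux.g (t + α) :=
        Aux.g_mono (hk'.2.le : gamma0 ≤ β') (by linarith : gamma0 ≤ t + α) (by linarith)
      linarith [h1, h2, heq', hteq]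
    · exact heq
    · exfalso
      have h1 : Aux.g t > Aux.g (β' - α) :=
        Aux.g_anti (⟨htpos, hkt.1.le⟩ : t ∈ Ioc 0 gamma0)
          (⟨hs', hk'.1.le⟩ : β' - α ∈ Ioc 0 gamma0) (by linarith)
      have h2 : Aux.g (t + α) < Aux.g β' :=
        Aux.g_mono (by linarith : gamma0 ≤ t + α) (hk'.2.le : gamma0 ≤ β') (by linarith)
      linarith [h1, h2, heq', hteq]
  · exact max_le (by linarith) (by linarith [hkt.2])
  · linarith [htmem.2]
  · linarith
  · linarith [htmem.2]

end
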